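/- Let 𝒵 be a measurable space, n ∈ ℕ, α ∈ [0,1], and let Z = (Z₁, …, Z_{n+1}) be a random vector in 𝒵^{n+1} defined on a probability space (Ω, P) whose components are exchangeable: for every permutation σ of {1, …, n+1}, the vector (Z_{σ(1)}, …, Z_{σ(n+1)}) has the same law as Z. Let φ : 𝒵^{n+1} → {0,1}^{n+1} be measurable and permutation-equivariant: for every z ∈ 𝒵^{n+1} and every permutation σ, φ(z ∘ σ) = φ(z) ∘ σ (i.e. φ(z_{σ(1)}, …, z_{σ(n+1)})_i = φ(z)_{σ(i)} for all i). Suppose that for every z ∈ 𝒵^{n+1}, ∑_{i=1}^{n+1} φ(z)_i ≥ (1 − α)(n + 1). Then P(φ(Z)_{n+1} = 1) ≥ 1 − α. -/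

import Mathlib

open MeasureTheory ENNReal

/-- Abstract distribution-free coverage guarantee for Risk Averse
Calibration: if `Z` is an exchangeable vector of `n+1` points and `φ` is a measurable,
permutation-equivariant selection rule whose selections always number at least
`(1−α)(n+1)`, then the last (test) point is selected with probability at least `1 − α`. -/
theorem stmt_11 {𝒵 Ω : Type*} [MeasurableSpace 𝒵] [MeasurableSpace Ω]
    (P : Measure Ω) [IsProbabilityMeasure P]
    (n : ℕ) (α : ℝ) (hα0 : 0 ≤ α) (hα1 : α ≤ 1)
    (Z : Ω → Fin (n + 1) → 𝒵) (hZ : Measurable Z)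
    (hexch : ∀ σ : Equiv.Perm (Fin (n + 1)),
      P.map (fun ω => fun i => Z ω (σ i)) = P.map Z)
    (φ : (Fin (n + 1) → 𝒵) → Fin (n + 1) → Bool) (hφ : Measurable φ)
    (hequi : ∀ (z : Fin (n + 1) → 𝒵) (σ : Equiv.Perm (Fin (n + 1))) (i : Fin (n + 1)),
      φ (fun j => z (σ j)) i = φ z (σ i))
    (hsum : ∀ z : Fin (n + 1) → 𝒵,
      (1 - α) * (n + 1) ≤ ∑ i, (if φ z i = true then (1 : ℝ) else 0)) :
    ENNReal.ofReal (1 - α) ≤ P {ω | φ (Z ω) (Fin.last n) = true} := by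
  -- measurability of coordinate selections
  have hmeas : ∀ i : Fin (n + 1), Measurable (fun ω => φ (Z ω) i) := fun i =>
    (measurable_pi_apply i).comp (hφ.comp hZ)
  have hS : ∀ i : Fin (n + 1), MeasurableSet {ω | φ (Z ω) i = true} := fun i =>
    (hmeas i) (measurableSet_singleton true)
  have hA : ∀ i : Fin (n + 1), MeasurableSet {z : Fin (n+1) → 𝒵 | φ z i = true} := fun i =>
    ((measurable_pi_apply i).comp hφ) (measurableSet_singleton true)
  -- all marginal probabilities equal the last one
  have hkey : ∀ i : Fin (n + 1),
      P {ω | φ (Z ω) i = true} = P {ω | φ (Z ω) (Fin.last n) = true} := by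
    intro i
    set σ := Equiv.swap i (Fin.last n) with hσ
    have hmeasσ : Measurable (fun ω => fun j => Z ω (σ j)) :=
      measurable_pi_lambda _ (fun j => (measurable_pi_apply (σ j)).comp hZ)
    have h1 := congrArg (fun μ : Measure (Fin (n+1) → 𝒵) =>
      μ {z | φ z i = true}) (hexch σ)
    rw [Measure.map_apply hmeasσ (hA i), Measure.map_apply hZ (hA i)] at h1
    have hpre : (fun ω => fun j => Z ω (σ j)) ⁻¹' {z | φ z i = true}
        = {ω | φ (Z ω) (σ i) = true} := by
      ext ω
      simp only [Set.mem_preimage, Set.mem_setOf_eq, hequi (Z ω) σ i]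
    have hσi : σ i = Fin.last n := Equiv.swap_apply_left i (Fin.last n)
    rw [hpre, hσi] at h1
    exact h1.symm
  set pL := P {ω | φ (Z ω) (Fin.last n) = true} with hpL
  -- sum of probabilities = lintegral of counting function
  have hsum' : (n + 1 : ℝ≥0∞) * pL
      = ∫⁻ ω, ∑ i, ({ω | φ (Z ω) i = true}).indicator (fun _ => (1 : ℝ≥0∞)) ω ∂P := by
    rw [lintegral_finset_sum]
    · have : ∀ i : Fin (n+1),
          ∫⁻ ω, ({ω | φ (Z ω) i = true}).indicator (fun _ => (1 : ℝ≥0∞)) ω ∂P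
            = pL := by
        intro i
        rw [lintegral_indicator (hS i)]
        simp [hkey i, hpL]
      simp only [this, Finset.sum_const, Finset.card_univ, Fintype.card_fin]
      simp [mul_comm, nsmul_eq_mul]
    · exact fun i _ => (measurable_const.indicator (hS i))
  -- pointwise lower bound on the counting function
  have hpoint : ∀ ω, ENNReal.ofReal ((1 - α) * (n + 1))
      ≤ ∑ i, ({ω | φ (Z ω) i = true}).indicator (fun _ => (1 : ℝ≥0∞)) ω := by
    intro ω
    have h2 : (∑ i, ({ω | φ (Z ω) i = true}).indicator (fun _ => (1 : ℝ≥0∞)) ω)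
        = ENNReal.ofReal (∑ i, (if φ (Z ω) i = true then (1 : ℝ) else 0)) := by
      rw [ENNReal.ofReal_sum_of_nonneg (fun i _ => by positivity)]
      refine Finset.sum_congr rfl fun i _ => ?_
      by_cases h : φ (Z ω) i = true <;> simp [Set.indicator, h]
    rw [h2]
    exact ENNReal.ofReal_le_ofReal (hsum (Z ω))
  -- combine
  have hlower : ENNReal.ofReal ((1 - α) * (n + 1)) ≤ (n + 1 : ℝ≥0∞) * pL := by
    rw [hsum']
    calc ENNReal.ofReal ((1 - α) * (n + 1))
        = ∫⁻ _, ENNReal.ofReal ((1 - α) * (n + 1)) ∂P := by simp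
      _ ≤ _ := lintegral_mono hpoint
  have h1α : 0 ≤ 1 - α := by linarith
  have hofmul : ENNReal.ofReal ((1 - α) * (n + 1))
      = ENNReal.ofReal (1 - α) * (n + 1 : ℝ≥0∞) := by
    rw [ENNReal.ofReal_mul h1α]
    congr 1
    rw [ENNReal.ofReal_add (by positivity) zero_le_one]
    simp [ENNReal.ofReal_natCast]
  rw [hofmul, mul_comm ((n:ℝ≥0∞)+1) pL] at hlower
  have hne0 : ((n : ℝ≥0∞) + 1) ≠ 0 := by simp
  have hnetop : ((n : ℝ≥0∞) + 1) ≠ ⊤ := by simp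
  exact (ENNReal.mul_le_mul_iff_left hne0 hnetop).mp hlower
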